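/- Let F = GF(q) be a finite field with q elements, R the ring of ternions over F, and n ≥ 1. If X ∈ R^{n+1} is a vector with I_X = I₁(b:1) = { (0 zb; 0 z) : z ∈ F } for some b ∈ F, then the number of non-unimodular free cyclic submodules of R^{n+1} containing X equals (q^n − 1)/(q − 1), i.e., this number N₃ satisfies (q − 1)·N₃ = q^n − 1; moreover, if I_X = I₁ (the ideal of ternions with zero first column), then X lies in exactly one non-unimodular free cyclic submodule, namely R·X itself. -/

import Mathlib

set_option synthInstance.maxHeartbeats 1000000
set_option maxHeartbeats 1000000

def ternions (F : Type) [Field F] : Subring (Matrix (Fin 2) (Fin 2) F) where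
  carrier := {A | A 1 0 = 0}
  zero_mem' := by simp
  one_mem' := by simp [Matrix.one_apply]
  add_mem' := by
    intro a b ha hb
    simp only [Set.mem_setOf_eq, Matrix.add_apply] at *
    simp [ha, hb]
  neg_mem' := by
    intro a ha
    simp only [Set.mem_setOf_eq, Matrix.neg_apply] at *
    simp [ha]
  mul_mem' := by
    intro a b ha hb
    simp only [Set.mem_setOf_eq, Matrix.mul_apply, Fin.sum_univ_two] at *
    simp [ha, hb]

namespace TernAux
variable {F : Type} [Field F]

def tmk (a b c : F) : ternions F :=
  ⟨!![a, b; 0, c], by show (!![a, b; 0, c] : Matrix (Fin 2) (Fin 2) F) 1 0 = 0; simp⟩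

@[simp] lemma tmk00 (a b c : F) : (tmk a b c).val 0 0 = a := by simp [tmk]
@[simp] lemma tmk01 (a b c : F) : (tmk a b c).val 0 1 = b := by simp [tmk]
@[simp] lemma tmk10 (a b c : F) : (tmk a b c).val 1 0 = 0 := by simp [tmk]
@[simp] lemma tmk11 (a b c : F) : (tmk a b c).val 1 1 = c := by simp [tmk]

lemma val10 (A : ternions F) : A.val 1 0 = 0 := A.2

lemma text {A B : ternions F} (h00 : A.val 0 0 = B.val 0 0)
    (h01 : A.val 0 1 = B.val 0 1) (h11 : A.val 1 1 = B.val 1 1) : A = B := by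
  apply Subtype.ext
  ext i j
  fin_cases i <;> fin_cases j <;> simp_all [val10]

lemma eq_tmk (A : ternions F) : A = tmk (A.val 0 0) (A.val 0 1) (A.val 1 1) :=
  text (by simp) (by simp) (by simp)

lemma tmk_inj {a b c a' b' c' : F} (h : tmk a b c = tmk a' b' c') :
    a = a' ∧ b = b' ∧ c = c' := by
  refine ⟨?_, ?_, ?_⟩ <;>
  · have := congrArg (fun A : ternions F => A.val) h
    simp only [tmk] at this
    first
      | exact congrFun (congrFun this 0) 0
      | exact congrFun (congrFun this 0) 1
      | exact congrFun (congrFun this 1) 1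

lemma tmk_mul (a b c x y z : F) :
    tmk a b c * tmk x y z = tmk (a*x) (a*y + b*z) (c*z) := by
  apply text <;>
    simp [tmk, Subring.coe_mul, Matrix.mul_apply, Fin.sum_univ_two]

@[simp] lemma tmk_add (a b c x y z : F) :
    tmk a b c + tmk x y z = tmk (a+x) (b+y) (c+z) := by
  apply text <;> simp

lemma tmk_zero : (tmk 0 0 0 : ternions F) = 0 := by apply text <;> simp
lemma tmk_one : (tmk 1 0 1 : ternions F) = 1 := by
  apply text <;> simp [Matrix.one_apply]

lemma mul00 (A B : ternions F) : (A*B).val 0 0 = A.val 0 0 * B.val 0 0 := by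
  have : (A*B).val = A.val * B.val := rfl
  rw [this, Matrix.mul_apply, Fin.sum_univ_two, val10 B]
  ring

variable {n : ℕ}


/-- vector with zero first column -/
def Yv (y z : Fin (n+1) → F) : Fin (n+1) → ternions F := fun i => tmk 0 (y i) (z i)

def Mo (y z : Fin (n+1) → F) : Submodule (ternions F) (Fin (n+1) → ternions F) :=
  Submodule.span (ternions F) {Yv y z}

def indep (y z : Fin (n+1) → F) : Prop := ∀ s t : F, s • y + t • z = 0 → s = 0 ∧ t = 0

lemma smul_Yv (x u w : F) (y z : Fin (n+1) → F) :
    tmk x u w • Yv y z = Yv (x • y + u • z) (w • z) := by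
  funext i
  show tmk x u w * tmk 0 (y i) (z i) = tmk 0 (x • y i + u • z i) (w • z i)
  rw [tmk_mul]
  congr 1 <;> simp [mul_comm] <;> ring

lemma Yv_inj {y z y' z' : Fin (n+1) → F} (h : Yv y z = Yv y' z') : y = y' ∧ z = z' := by
  constructor <;> funext i <;>
  · have := congrFun h i
    have h2 := tmk_inj this
    tauto

lemma indep_z_ne {y z : Fin (n+1) → F} (h : indep y z) : z ≠ 0 := by
  intro hz
  have := (h 0 1 (by simp [hz])).2
  simp at this

lemma indep_shift {y z : Fin (n+1) → F} (h : indep y z) {x : F} (hx : x ≠ 0)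
    (u : F) {w : F} (hw : w ≠ 0) : indep (x • y + u • z) (w • z) := by
  intro s t hst
  have : (s * x) • y + (s * u + t * w) • z = 0 := by
    rw [← hst]; funext i; simp; ring
  obtain ⟨h1, h2⟩ := h _ _ this
  have hs : s = 0 := by
    rcases mul_eq_zero.1 h1 with h | h
    · exact h
    · exact absurd h hx
  constructor
  · exact hs
  · rw [hs, zero_mul, zero_add] at h2
    rcases mul_eq_zero.1 h2 with h | h
    · exact h
    · exact absurd h hw


lemma mem_Mo {A : Fin (n+1) → ternions F} {y z : Fin (n+1) → F} :
    A ∈ Mo y z ↔ ∃ x u w : F, A = Yv (x • y + u • z) (w • z) := by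
  rw [Mo, Submodule.mem_span_singleton]
  constructor
  · rintro ⟨r, rfl⟩
    refine ⟨r.val 0 0, r.val 0 1, r.val 1 1, ?_⟩
    rw [← smul_Yv, ← eq_tmk]
  · rintro ⟨x, u, w, rfl⟩
    exact ⟨tmk x u w, smul_Yv x u w y z⟩

lemma Mo_smul_eq {x w : F} (hx : x ≠ 0) (hw : w ≠ 0) (u : F) (y z : Fin (n+1) → F) :
    Mo (x • y + u • z) (w • z) = Mo y z := by
  apply le_antisymm <;> rw [Mo, Submodule.span_le, Set.singleton_subset_iff]
  · exact mem_Mo.2 ⟨x, u, w, rfl⟩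
  · refine mem_Mo.2 ⟨x⁻¹, -(x⁻¹ * u * w⁻¹), w⁻¹, ?_⟩
    have h1 : x⁻¹ • (x • y + u • z) + -(x⁻¹ * u * w⁻¹) • w • z = y := by
      funext i; simp; field_simp; ring
    have h2 : w⁻¹ • w • z = z := by funext i; simp; field_simp
    rw [h1, h2]

/-- right multiplication linear map -/
def rmul (t : Fin (n+1) → ternions F) :
    (Fin (n+1) → ternions F) →ₗ[ternions F] ternions F where
  toFun V := ∑ k, V k * t k
  map_add' := by intro a b; simp [add_mul, Finset.sum_add_distrib]
  map_smul' := by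
    intro r V
    simp only [Pi.smul_apply, smul_eq_mul, RingHom.id_apply, mul_assoc, Finset.mul_sum]

lemma inj_of_indep {y z : Fin (n+1) → F} (h : indep y z) :
    Function.Injective (fun r : ternions F => r • Yv y z) := by
  intro r r' hrr
  simp only at hrr
  rw [eq_tmk r, eq_tmk r'] at hrr ⊢
  rw [smul_Yv, smul_Yv] at hrr
  obtain ⟨h1, h2⟩ := Yv_inj hrr
  have e1 : (r.val 0 0 - r'.val 0 0) • y + (r.val 0 1 - r'.val 0 1) • z = 0 := by
    funext i
    have := congrFun h1 i
    simp only [Pi.add_apply, Pi.smul_apply, smul_eq_mul] at this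
    simp only [Pi.add_apply, Pi.smul_apply, smul_eq_mul, Pi.zero_apply]
    linear_combination this
  obtain ⟨e00, e01⟩ := h _ _ e1
  have e2 : (0:F) • y + (r.val 1 1 - r'.val 1 1) • z = 0 := by
    funext i
    have := congrFun h2 i
    simp only [Pi.smul_apply, smul_eq_mul] at this
    simp only [Pi.add_apply, Pi.smul_apply, smul_eq_mul, Pi.zero_apply]
    linear_combination this
  have e11 := (h _ _ e2).2
  rw [sub_eq_zero.1 e00, sub_eq_zero.1 e01, sub_eq_zero.1 e11]

lemma not_uni (y z : Fin (n+1) → F) :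
    ¬ ∃ φ : (Fin (n+1) → ternions F) →ₗ[ternions F] ternions F, φ (Yv y z) = 1 := by
  rintro ⟨φ, hφ⟩
  have hdecomp : Yv y z = ∑ i, (Yv y z i) • (Pi.single (M := fun _ : Fin (n+1) => ternions F) i 1) := by
    funext j
    rw [Finset.sum_apply]
    rw [Finset.sum_eq_single j]
    · simp
    · intro i _ hij
      simp [Pi.single_apply, Ne.symm hij]
    · simp
  have h1 : (1 : ternions F) = ∑ i, (Yv y z i) * φ (Pi.single (M := fun _ : Fin (n+1) => ternions F) i 1) := by
    conv_lhs => rw [← hφ]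
    conv_lhs => rw [hdecomp]
    rw [map_sum]
    exact Finset.sum_congr rfl fun i _ => by rw [map_smul, smul_eq_mul]
  have h2 := congrArg (fun A : ternions F => A.val 0 0) h1
  try simp only at h2
  have h3 : ((∑ i, (Yv y z i) * φ (Pi.single (M := fun _ : Fin (n+1) => ternions F) i 1)).val) 0 0 = 0 := by
    have hc : ((∑ i, (Yv y z i) * φ (Pi.single (M := fun _ : Fin (n+1) => ternions F) i 1)).val)
        = ∑ i, ((Yv y z i) * φ (Pi.single i (1 : ternions F))).val :=
      map_sum (ternions F).subtype _ _
    rw [hc, Matrix.sum_apply]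
    apply Finset.sum_eq_zero
    intro i _
    rw [mul00]
    have : (Yv y z i).val 0 0 = 0 := by simp [Yv]
    rw [this, zero_mul]
  rw [h3] at h2
  have : ((1 : ternions F)).val 0 0 = 1 := by
    show (1 : Matrix (Fin 2) (Fin 2) F) 0 0 = 1
    simp
  rw [this] at h2
  exact one_ne_zero h2

lemma good_of_indep {y z : Fin (n+1) → F} (h : indep y z) :
    ∃ Y : Fin (n+1) → ternions F, Mo y z = Submodule.span (ternions F) {Y} ∧
      Function.Injective (fun r : ternions F => r • Y) ∧
      ¬ ∃ φ : (Fin (n+1) → ternions F) →ₗ[ternions F] ternions F, φ Y = 1 :=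
  ⟨Yv y z, rfl, inj_of_indep h, not_uni y z⟩

lemma good_imp {M : Submodule (ternions F) (Fin (n+1) → ternions F)}
    (hg : ∃ Y : Fin (n+1) → ternions F, M = Submodule.span (ternions F) {Y} ∧
      Function.Injective (fun r : ternions F => r • Y) ∧
      ¬ ∃ φ : (Fin (n+1) → ternions F) →ₗ[ternions F] ternions F, φ Y = 1) :
    ∃ y z : Fin (n+1) → F, indep y z ∧ M = Mo y z := by
  obtain ⟨Y, hM, hinj, huni⟩ := hg
  -- step 1 : first column of each Y i vanishes
  have hA : ∀ i, (Y i).val 0 0 = 0 := by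
    by_contra hcon
    push_neg at hcon
    obtain ⟨i, hi⟩ := hcon
    have hcj : ∃ j, (Y j).val 1 1 ≠ 0 := by
      by_contra hc0
      push_neg at hc0
      have h00 : tmk (0:F) 0 1 • Y = (0 : ternions F) • Y := by
        funext k
        show tmk (0:F) 0 1 * Y k = (0 : ternions F) • Y k
        rw [eq_tmk (Y k), tmk_mul, hc0 k]
        apply text <;> simp [val10]
      have := hinj h00
      have := congrArg (fun A : ternions F => A.val 1 1) this
      simp at this
    obtain ⟨j, hj⟩ := hcj
    apply huni
    set g : ternions F := tmk 1 ((Y j).val 0 1 * ((Y j).val 1 1)⁻¹) 1 with hg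
    set ginv : ternions F := tmk 1 (-((Y j).val 0 1 * ((Y j).val 1 1)⁻¹)) 1 with hginv
    have hgg : g * ginv = 1 := by
      rw [hg, hginv, tmk_mul, ← tmk_one]
      congr 1 <;> ring
    set s : Fin (n+1) → ternions F := fun k =>
      (if k = i then tmk ((Y i).val 0 0)⁻¹ 0 0 else 0)
        + (if k = j then tmk 0 0 (((Y j).val 1 1)⁻¹) else 0) with hs
    refine ⟨rmul (fun k => s k * ginv), ?_⟩
    show ∑ k, Y k * (s k * ginv) = 1
    have hsum : ∑ k, Y k * s k = g := by
      have hterm : ∀ k, Y k * s k =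
          (if k = i then Y i * tmk ((Y i).val 0 0)⁻¹ 0 0 else 0)
          + (if k = j then Y j * tmk 0 0 (((Y j).val 1 1)⁻¹) else 0) := by
        intro k
        rw [hs]
        simp only
        rw [mul_add]
        congr 1 <;> split <;> simp_all
      rw [Finset.sum_congr rfl (fun k _ => hterm k)]
      rw [Finset.sum_add_distrib, Finset.sum_ite_eq' Finset.univ i,
        Finset.sum_ite_eq' Finset.univ j]
      simp only [Finset.mem_univ, if_true]
      rw [eq_tmk (Y i), eq_tmk (Y j), tmk_mul, tmk_mul, hg, tmk_add]
      apply text <;> simp only [tmk00, tmk01, tmk11] <;> field_simp <;> simp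
    calc ∑ k, Y k * (s k * ginv) = (∑ k, Y k * s k) * ginv := by
          rw [Finset.sum_mul]
          exact Finset.sum_congr rfl fun k _ => (mul_assoc _ _ _).symm
      _ = 1 := by rw [hsum, hgg]
  -- step 2 : Y has normal form
  have hY : Y = Yv (fun i => (Y i).val 0 1) (fun i => (Y i).val 1 1) := by
    funext i
    show Y i = tmk 0 ((Y i).val 0 1) ((Y i).val 1 1)
    conv_lhs => rw [eq_tmk (Y i), hA i]
  refine ⟨_, _, ?_, by rw [hM, hY]; rfl⟩
  -- step 3 : independence
  intro s t hst
  have h00 : tmk s t 0 • Y = (0 : ternions F) • Y := by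
    funext k
    show tmk s t 0 * Y k = (0 : ternions F) • Y k
    have hk := congrFun hst k
    simp only [Pi.add_apply, Pi.smul_apply, smul_eq_mul, Pi.zero_apply] at hk
    rw [eq_tmk (Y k), tmk_mul, hA k]
    apply text <;> simp <;> linear_combination hk
  have h0 := hinj h00
  have h1 := congrArg (fun A : ternions F => A.val 0 0) h0
  have h2 := congrArg (fun A : ternions F => A.val 0 1) h0
  simp at h1 h2
  exact ⟨h1, h2⟩

lemma span_form {X : Fin (n+1) → ternions F}
    (hA : ∀ i, (X i).val 0 0 = 0) {A : ternions F}
    (hmem : A ∈ Submodule.span (ternions F)ᵐᵒᵖ (Set.range X)) :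
    ∃ w : Fin (n+1) → F,
      A = tmk 0 (∑ i, w i * (X i).val 0 1) (∑ i, w i * (X i).val 1 1) := by
  induction hmem using Submodule.span_induction with
  | mem x hx =>
      obtain ⟨k, rfl⟩ := hx
      refine ⟨Pi.single k 1, ?_⟩
      rw [Finset.sum_eq_single k
          (by intro i _ hik; simp [Pi.single_apply, hik])
          (by simp),
        Finset.sum_eq_single k
          (by intro i _ hik; simp [Pi.single_apply, hik])
          (by simp)]
      simp only [Pi.single_eq_same, one_mul]
      conv_lhs => rw [eq_tmk (X k), hA k]
  | zero =>
      exact ⟨0, by simp [← tmk_zero]⟩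
  | add x y hx hy ihx ihy =>
      obtain ⟨w1, rfl⟩ := ihx
      obtain ⟨w2, rfl⟩ := ihy
      refine ⟨w1 + w2, ?_⟩
      rw [tmk_add]
      congr 1
      · ring
      · rw [← Finset.sum_add_distrib]
        exact Finset.sum_congr rfl fun i _ => by simp [add_mul]
      · rw [← Finset.sum_add_distrib]
        exact Finset.sum_congr rfl fun i _ => by simp [add_mul]
  | smul r x hx ihx =>
      obtain ⟨w1, rfl⟩ := ihx
      refine ⟨fun i => w1 i * (r.unop).val 1 1, ?_⟩
      rw [MulOpposite.smul_eq_mul_unop]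
      conv_lhs => rw [eq_tmk r.unop]
      rw [tmk_mul]
      refine text ?_ ?_ ?_ <;> simp only [tmk00, tmk01, tmk11, Finset.sum_mul,
        zero_mul, zero_add]
      · exact Finset.sum_congr rfl fun i _ => by ring
      · exact Finset.sum_congr rfl fun i _ => by ring

lemma coord_in_span {X : Fin (n+1) → ternions F} (k : Fin (n+1)) :
    X k ∈ Submodule.span (ternions F)ᵐᵒᵖ (Set.range X) :=
  Submodule.subset_span ⟨k, rfl⟩

lemma sum_key {y z w : Fin (n+1) → F} {s t : F} (hst : s • y + t • z = 0) :
    (∑ i, w i * y i) * s + (∑ i, w i * z i) * t = 0 := by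
  have h0 : ∀ i, s * y i + t * z i = 0 := fun i => by
    have := congrFun hst i
    simpa using this
  calc (∑ i, w i * y i) * s + (∑ i, w i * z i) * t
      = ∑ i, w i * (s * y i + t * z i) := by
        rw [Finset.sum_mul, Finset.sum_mul, ← Finset.sum_add_distrib]
        exact Finset.sum_congr rfl fun i _ => by ring
    _ = 0 := by simp [h0]

lemma part2_lemma (X : Fin (n+1) → ternions F)
    (hsp : (Submodule.span (ternions F)ᵐᵒᵖ (Set.range X) : Set (ternions F)) =
      {A : ternions F | A.val 0 0 = 0}) :
    {M : Submodule (ternions F) (Fin (n + 1) → ternions F) |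
        (∃ Y : Fin (n + 1) → ternions F, M = Submodule.span (ternions F) {Y} ∧
          Function.Injective (fun r : ternions F => r • Y) ∧
          ¬ ∃ φ : (Fin (n + 1) → ternions F) →ₗ[ternions F] ternions F, φ Y = 1) ∧
        X ∈ M} =
      {Submodule.span (ternions F) {X}} := by
  have hA : ∀ i, (X i).val 0 0 = 0 := by
    intro i
    have h := coord_in_span (X := X) i
    rw [← SetLike.mem_coe, hsp] at h
    exact h
  set yX : Fin (n+1) → F := fun i => (X i).val 0 1 with hyX
  set zX : Fin (n+1) → F := fun i => (X i).val 1 1 with hzX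
  have hY : X = Yv yX zX := by
    funext i
    show X i = tmk 0 (yX i) (zX i)
    conv_lhs => rw [eq_tmk (X i), hA i]
  have hw1 : ∃ w : Fin (n+1) → F, ∑ i, w i * yX i = 1 ∧ ∑ i, w i * zX i = 0 := by
    have hmem : (tmk 0 1 0 : ternions F) ∈
        Submodule.span (ternions F)ᵐᵒᵖ (Set.range X) := by
      rw [← SetLike.mem_coe, hsp]; show (tmk (0:F) 1 0).val 0 0 = 0; simp
    obtain ⟨w, hw⟩ := span_form hA hmem
    obtain ⟨-, h1, h2⟩ := tmk_inj hw
    exact ⟨w, h1.symm, h2.symm⟩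
  have hw2 : ∃ w : Fin (n+1) → F, ∑ i, w i * yX i = 0 ∧ ∑ i, w i * zX i = 1 := by
    have hmem : (tmk 0 0 1 : ternions F) ∈
        Submodule.span (ternions F)ᵐᵒᵖ (Set.range X) := by
      rw [← SetLike.mem_coe, hsp]; show (tmk (0:F) 0 1).val 0 0 = 0; simp
    obtain ⟨w, hw⟩ := span_form hA hmem
    obtain ⟨-, h1, h2⟩ := tmk_inj hw
    exact ⟨w, h1.symm, h2.symm⟩
  have hindep : indep yX zX := by
    intro s t hst
    obtain ⟨w, hwa, hwb⟩ := hw1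
    obtain ⟨w', hwa', hwb'⟩ := hw2
    constructor
    · have := sum_key (w := w) hst
      rw [hwa, hwb] at this
      simpa using this
    · have := sum_key (w := w') hst
      rw [hwa', hwb'] at this
      simpa using this
  ext M
  simp only [Set.mem_setOf_eq, Set.mem_singleton_iff]
  constructor
  · rintro ⟨hg, hmem⟩
    obtain ⟨y', z', hind', hM⟩ := good_imp hg
    rw [hM] at hmem
    obtain ⟨x, u, w, hXeq⟩ := mem_Mo.1 hmem
    rw [hY] at hXeq
    obtain ⟨hy, hz⟩ := Yv_inj hXeq
    have hw : w ≠ 0 := by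
      intro hw0
      apply indep_z_ne hindep
      rw [hz, hw0, zero_smul]
    have hx : x ≠ 0 := by
      intro hx0
      rw [hx0, zero_smul, zero_add] at hy
      have : (1:F) • yX + (-(u * w⁻¹)) • zX = 0 := by
        rw [hy, hz]
        funext i
        simp only [Pi.add_apply, Pi.smul_apply, smul_eq_mul, Pi.zero_apply]
        field_simp
        ring
      exact one_ne_zero (hindep 1 (-(u * w⁻¹)) this).1
    rw [hM, ← Mo_smul_eq hx hw u y' z']
    rw [hY]
    show Mo (x • y' + u • z') (w • z') = Mo yX zX
    rw [hy, hz]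
  · rintro rfl
    refine ⟨⟨Yv yX zX, by rw [hY], inj_of_indep hindep, not_uni _ _⟩,
      Submodule.mem_span_singleton_self X⟩

lemma card_fiber_const {α β : Type*} [Finite α] [Finite β] (f : α → β) (k : ℕ)
    (hk : ∀ b : β, Nat.card {a : α // f a = b} = k) :
    Nat.card α = k * Nat.card β := by
  classical
  haveI := Fintype.ofFinite α
  haveI := Fintype.ofFinite β
  rw [Nat.card_eq_fintype_card, Nat.card_eq_fintype_card]
  have h1 : Fintype.card α = Fintype.card (Σ b : β, {a : α // f a = b}) :=
    Fintype.card_congr (Equiv.sigmaFiberEquiv f).symm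
  rw [h1, Fintype.card_sigma]
  have h2 : ∀ b : β, Fintype.card {a : α // f a = b} = k := by
    intro b
    rw [← Nat.card_eq_fintype_card]
    exact hk b
  rw [Finset.sum_congr rfl fun b _ => h2 b, Finset.sum_const, Finset.card_univ,
    smul_eq_mul, mul_comm]

lemma card_units_mul (q : ℕ) [Fintype F] (hq : Fintype.card F = q) :
    Nat.card ({x : F // x ≠ 0} × F) = (q - 1) * q := by
  classical
  rw [Nat.card_prod, Nat.card_eq_fintype_card, Nat.card_eq_fintype_card,
    Fintype.card_subtype_compl, Fintype.card_subtype_eq, hq]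

lemma indep_iff_not_mult {y z : Fin (n+1) → F} (hz : z ≠ 0) :
    indep y z ↔ ¬ ∃ c : F, y = c • z := by
  constructor
  · rintro h ⟨c, rfl⟩
    have : (1:F) • (c • z) + (-c) • z = 0 := by
      funext i; simp
    exact one_ne_zero (h 1 (-c) this).1
  · intro h s t hst
    by_cases hs : s = 0
    · refine ⟨hs, ?_⟩
      rw [hs, zero_smul, zero_add] at hst
      obtain ⟨i, hi⟩ := Function.ne_iff.1 hz
      have := congrFun hst i
      simp only [Pi.smul_apply, smul_eq_mul, Pi.zero_apply] at this
      rcases mul_eq_zero.1 this with h' | h'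
      · exact h'
      · simp at hi; exact absurd h' hi
    · exfalso
      apply h
      refine ⟨-(t/s), ?_⟩
      funext i
      have := congrFun hst i
      simp only [Pi.add_apply, Pi.smul_apply, smul_eq_mul, Pi.zero_apply] at this
      simp only [Pi.smul_apply, smul_eq_mul]
      field_simp
      linear_combination this

lemma card_indep [Fintype F] (q : ℕ) (hq : Fintype.card F = q)
    {z : Fin (n+1) → F} (hz : z ≠ 0) :
    Nat.card {y : Fin (n+1) → F // indep y z} = q ^ (n+1) - q := by
  classical
  have he : {y : Fin (n+1) → F // indep y z} ≃
      {y : Fin (n+1) → F // ¬ ∃ c : F, y = c • z} :=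
    Equiv.subtypeEquivRight fun y => by rw [indep_iff_not_mult hz]
  rw [Nat.card_congr he, Nat.card_eq_fintype_card, Fintype.card_subtype_compl]
  have h1 : Fintype.card (Fin (n+1) → F) = q ^ (n+1) := by
    rw [Fintype.card_fun, hq, Fintype.card_fin]
  have h2 : Fintype.card {y : Fin (n+1) → F // ∃ c : F, y = c • z} = q := by
    rw [← hq, ← Nat.card_eq_fintype_card (α := F),
      ← Nat.card_eq_fintype_card]
    apply Nat.card_congr
    apply Equiv.symm
    apply Equiv.ofBijective (f := fun c : F => (⟨c • z, c, rfl⟩ :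
      {y : Fin (n+1) → F // ∃ c : F, y = c • z}))
    constructor
    · intro c c' hcc
      have : c • z = c' • z := congrArg Subtype.val hcc
      obtain ⟨i, hi⟩ := Function.ne_iff.1 hz
      have h3 := congrFun this i
      simp only [Pi.smul_apply, smul_eq_mul] at h3
      have hzi : z i ≠ 0 := by simpa using hi
      exact mul_right_cancel₀ hzi h3
    · rintro ⟨y, c, rfl⟩
      exact ⟨c, rfl⟩
  rw [h1, h2]
lemma Mo_eq_iff {y y' z : Fin (n+1) → F} (hy' : indep y' z) :
    Mo y z = Mo y' z ↔ ∃ x : F, x ≠ 0 ∧ ∃ u : F, y' = x • y + u • z := by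
  constructor
  · intro h
    have hmem : Yv y' z ∈ Mo y z := by
      rw [h]
      exact Submodule.mem_span_singleton_self _
    obtain ⟨x, u, w, hYv⟩ := mem_Mo.1 hmem
    obtain ⟨h1, _⟩ := Yv_inj hYv
    refine ⟨x, ?_, u, h1⟩
    intro hx0
    rw [hx0, zero_smul, zero_add] at h1
    have : (1:F) • y' + (-u) • z = 0 := by
      rw [h1]; funext i; simp
    exact one_ne_zero (hy' 1 (-u) this).1
  · rintro ⟨x, hx, u, rfl⟩
    rw [← Mo_smul_eq hx (one_ne_zero (α := F)) u y z, one_smul]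

lemma part1_lemma [Fintype F] (q : ℕ) (hq : Fintype.card F = q)
    (X : Fin (n+1) → ternions F) (b : F)
    (hsp : (Submodule.span (ternions F)ᵐᵒᵖ (Set.range X) : Set (ternions F)) =
      {A : ternions F | A.val 0 0 = 0 ∧ ∃ z : F, A.val 0 1 = z * b ∧ A.val 1 1 = z}) :
    (q - 1) *
        Nat.card {M : Submodule (ternions F) (Fin (n + 1) → ternions F) //
          (∃ Y : Fin (n + 1) → ternions F, M = Submodule.span (ternions F) {Y} ∧
            Function.Injective (fun r : ternions F => r • Y) ∧
            ¬ ∃ φ : (Fin (n + 1) → ternions F) →ₗ[ternions F] ternions F, φ Y = 1) ∧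
          X ∈ M} =
      q ^ n - 1 := by
  set zX : Fin (n+1) → F := fun i => (X i).val 1 1 with hzX
  have hXform : ∀ i, X i = tmk 0 (b * zX i) (zX i) := by
    intro i
    have h := coord_in_span (X := X) i
    rw [← SetLike.mem_coe, hsp] at h
    obtain ⟨h0, zi, h1, h2⟩ := h
    have h1' : (X i).val 0 1 = b * zX i := by
      rw [h1, hzX]
      simp only
      rw [h2, mul_comm]
    conv_lhs => rw [eq_tmk (X i), h0, h1']
  have hz : zX ≠ 0 := by
    intro hz0
    have hX0 : ∀ i, X i = 0 := by
      intro i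
      rw [hXform i, congrFun hz0 i]
      simp only [Pi.zero_apply, mul_zero]
      exact tmk_zero
    have hle : Submodule.span (ternions F)ᵐᵒᵖ (Set.range X) ≤ ⊥ := by
      rw [Submodule.span_le]
      rintro _ ⟨i, rfl⟩
      rw [hX0 i]
      simp
    have hb1 : (tmk 0 b 1 : ternions F) ∈
        Submodule.span (ternions F)ᵐᵒᵖ (Set.range X) := by
      rw [← SetLike.mem_coe, hsp]
      exact ⟨by simp, 1, by simp⟩
    have := hle hb1
    rw [Submodule.mem_bot, ← tmk_zero] at this
    exact one_ne_zero (tmk_inj this).2.2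
  have hX : X = Yv (b • zX) zX := by
    funext i
    show X i = tmk 0 ((b • zX) i) (zX i)
    rw [hXform i]
    rfl
  -- characterization of the good submodules through X
  have hChar : ∀ M : Submodule (ternions F) (Fin (n + 1) → ternions F),
      ((∃ Y : Fin (n + 1) → ternions F, M = Submodule.span (ternions F) {Y} ∧
          Function.Injective (fun r : ternions F => r • Y) ∧
          ¬ ∃ φ : (Fin (n + 1) → ternions F) →ₗ[ternions F] ternions F, φ Y = 1) ∧
        X ∈ M) ↔ ∃ y : Fin (n+1) → F, indep y zX ∧ M = Mo y zX := by
    intro M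
    constructor
    · rintro ⟨hg, hmem⟩
      obtain ⟨y', z', hind', hM⟩ := good_imp hg
      rw [hM] at hmem
      obtain ⟨x, u, w, hXeq⟩ := mem_Mo.1 hmem
      rw [hX] at hXeq
      obtain ⟨hy, hzz⟩ := Yv_inj hXeq
      have hw : w ≠ 0 := by
        intro hw0
        apply hz
        rw [hzz, hw0, zero_smul]
      refine ⟨y', ?_, ?_⟩
      · have := indep_shift hind' (one_ne_zero (α := F)) 0 hw
        rw [one_smul, zero_smul, add_zero, ← hzz] at this
        exact this
      · rw [hM, ← Mo_smul_eq (one_ne_zero (α := F)) hw 0 y' z',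
          one_smul, zero_smul, add_zero, ← hzz]
    · rintro ⟨y, hind, rfl⟩
      refine ⟨good_of_indep hind, ?_⟩
      rw [hX]
      apply mem_Mo.2
      refine ⟨0, b, 1, ?_⟩
      rw [zero_smul, zero_add, one_smul]
  -- now count
  classical
  haveI : Finite (Submodule (ternions F) (Fin (n + 1) → ternions F)) :=
    Finite.of_injective (fun M => (M : Set (Fin (n + 1) → ternions F)))
      SetLike.coe_injective
  set S := {M : Submodule (ternions F) (Fin (n + 1) → ternions F) //
      (∃ Y : Fin (n + 1) → ternions F, M = Submodule.span (ternions F) {Y} ∧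
        Function.Injective (fun r : ternions F => r • Y) ∧
        ¬ ∃ φ : (Fin (n + 1) → ternions F) →ₗ[ternions F] ternions F, φ Y = 1) ∧
      X ∈ M} with hS
  set D := {y : Fin (n+1) → F // indep y zX} with hD
  set f : D → S := fun y => ⟨Mo y.1 zX, (hChar _).2 ⟨y.1, y.2, rfl⟩⟩ with hf
  have hfib : ∀ s : S, Nat.card {a : D // f a = s} = (q - 1) * q := by
    intro s
    obtain ⟨y₀, hy₀⟩ : ∃ a : D, f a = s := by
      obtain ⟨y, hind, hM⟩ := (hChar s.1).1 s.2
      exact ⟨⟨y, hind⟩, Subtype.ext hM.symm⟩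
    rw [← card_units_mul (F := F) q hq]
    apply Nat.card_congr
    apply Equiv.symm
    apply Equiv.ofBijective (f := fun p : {x : F // x ≠ 0} × F =>
      (⟨⟨p.1.1 • y₀.1 + p.2 • zX,
        by have := indep_shift y₀.2 p.1.2 p.2 (one_ne_zero (α := F));
           rwa [one_smul] at this⟩,
        by
          apply Subtype.ext
          show Mo (p.1.1 • y₀.1 + p.2 • zX) zX = (s : Submodule _ _)
          rw [← hy₀]
          show Mo (p.1.1 • y₀.1 + p.2 • zX) zX = Mo y₀.1 zX
          have := Mo_smul_eq p.1.2 (one_ne_zero (α := F)) p.2 y₀.1 zX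
          rwa [one_smul] at this⟩ : {a : D // f a = s}))
    constructor
    · rintro ⟨⟨x, hx⟩, u⟩ ⟨⟨x', hx'⟩, u'⟩ hpp
      have h1 : x • y₀.1 + u • zX = x' • y₀.1 + u' • zX := by
        have := congrArg (fun a => a.1.1) hpp
        exact this
      have h2 : (x - x') • y₀.1 + (u - u') • zX = 0 := by
        funext i
        have := congrFun h1 i
        simp only [Pi.add_apply, Pi.smul_apply, smul_eq_mul] at this
        simp only [Pi.add_apply, Pi.smul_apply, smul_eq_mul, Pi.zero_apply]
        linear_combination this
      obtain ⟨e1, e2⟩ := y₀.2 _ _ h2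
      have : x = x' := by linear_combination e1
      have h3 : u = u' := by linear_combination e2
      simp [Prod.ext_iff, this, h3]
    · rintro ⟨⟨y, hind⟩, hfy⟩
      have hMo : Mo y₀.1 zX = Mo y zX := by
        have h1 := congrArg Subtype.val hy₀
        have h2 := congrArg Subtype.val hfy
        try simp only at h1 h2
        rw [← h1] at h2
        exact h2.symm
      obtain ⟨x, hx, u, hyy⟩ := (Mo_eq_iff hind).1 hMo
      refine ⟨⟨⟨x, hx⟩, u⟩, ?_⟩
      apply Subtype.ext
      apply Subtype.ext
      exact hyy.symm
  have hcount : q ^ (n+1) - q = ((q - 1) * q) * Nat.card S := by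
    rw [← card_indep (n := n) q hq hz]
    exact card_fiber_const f _ hfib
  have hq2 : 2 ≤ q := by
    rw [← hq]
    exact Fintype.one_lt_card
  have hm : 1 ≤ q ^ n := Nat.one_le_pow _ _ (by omega)
  have hqpos : 0 < q := by omega
  apply Nat.eq_of_mul_eq_mul_left hqpos
  calc q * ((q - 1) * Nat.card S) = ((q - 1) * q) * Nat.card S := by ring
    _ = q ^ (n+1) - q := hcount.symm
    _ = q * q ^ n - q * 1 := by rw [pow_succ, mul_comm, mul_one]
    _ = q * (q ^ n - 1) := (Nat.mul_sub q (q ^ n) 1).symm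
end TernAux


/-- Over `F = GF(q)`: if the coordinates of `X ∈ R^{n+1}` generate as right ideal exactly
`I₁(b:1) = { (0 zb; 0 z) : z ∈ F }` for some `b ∈ F`, then the number `N₃` of
non-unimodular free cyclic submodules containing `X` satisfies `(q - 1)·N₃ = q^n - 1`;
moreover, if they generate exactly `I₁` (zero first column), then `X` lies in exactly
one non-unimodular free cyclic submodule, namely `R·X` itself. -/
theorem ternion_count_through_I1b1_and_I1_vectors (F : Type) [Field F] [Fintype F]
    (q n : ℕ) (hq : Fintype.card F = q) (hn : 1 ≤ n) :
    (∀ X : Fin (n + 1) → ternions F, ∀ b : F,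
      (Submodule.span (ternions F)ᵐᵒᵖ (Set.range X) : Set (ternions F)) =
          {A : ternions F | A.val 0 0 = 0 ∧ ∃ z : F, A.val 0 1 = z * b ∧ A.val 1 1 = z} →
      (q - 1) *
          Nat.card {M : Submodule (ternions F) (Fin (n + 1) → ternions F) //
            (∃ Y : Fin (n + 1) → ternions F, M = Submodule.span (ternions F) {Y} ∧
              Function.Injective (fun r : ternions F => r • Y) ∧
              ¬ ∃ φ : (Fin (n + 1) → ternions F) →ₗ[ternions F] ternions F, φ Y = 1) ∧
            X ∈ M} =
        q ^ n - 1) ∧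
    (∀ X : Fin (n + 1) → ternions F,
      (Submodule.span (ternions F)ᵐᵒᵖ (Set.range X) : Set (ternions F)) =
          {A : ternions F | A.val 0 0 = 0} →
      {M : Submodule (ternions F) (Fin (n + 1) → ternions F) |
          (∃ Y : Fin (n + 1) → ternions F, M = Submodule.span (ternions F) {Y} ∧
            Function.Injective (fun r : ternions F => r • Y) ∧
            ¬ ∃ φ : (Fin (n + 1) → ternions F) →ₗ[ternions F] ternions F, φ Y = 1) ∧
          X ∈ M} =
        {Submodule.span (ternions F) {X}}) := by
  constructor
  · intro X b hsp
    exact TernAux.part1_lemma q hq X b hsp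
  · intro X hsp
    exact TernAux.part2_lemma X hsp
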